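/- arXiv:1202.0018 — 3 statements merged into one kernel-verified Lean document; each statement's English description precedes it below -/
import Mathlib

section
/- Semantic correctness of the updatability predicate U_ut^1: for any node n, n satisfies U_ut^1 := ↑*::*[φ_ann][1][φ_valid] if and only if the nearest ancestor-or-self node of n carrying an annotation of type ut exists and that annotation is valid at it, where φ_ann holds at a node iff its label carries an annotation of type ut, the position predicate [1] selects the first element of the ancestor-or-self sequence ordered from n upward, and φ_valid holds at a node iff the annotation on its label is valid there. -/
/-- Values of update/access annotations: `Y`, `N`, `[Q]`, `N_h`, `[Q]_h`,
where qualifiers are abstract node predicates. -/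
inductive AnnValue (Node : Type) where
  | Y : AnnValue Node
  | N : AnnValue Node
  | Q : (Node → Prop) → AnnValue Node
  | Nh : AnnValue Node
  | Qh : (Node → Prop) → AnnValue Node

/-- An annotation value is valid at a node. -/
def AnnValue.validAt {Node : Type} : AnnValue Node → Node → Prop
  | .Y, _ => True
  | .N, _ => False
  | .Q q, n => q n
  | .Nh, _ => False
  | .Qh q, n => q n

/-- The value is a downward-closed annotation that is invalid at the node carrying it. -/
def AnnValue.invalidDC {Node : Type} : AnnValue Node → Node → Prop
  | .Nh, _ => True
  | .Qh q, n => ¬ q n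
  | _, _ => False

/-- A finite labeled rooted tree: nodes, labels, a parent function (none at the root),
and the (finite) ancestor-or-self list of each node, ordered from the node up to the root. -/
structure LTree (σ : Type) where
  Node : Type
  label : Node → σ
  parent : Node → Option Node
  ancSelf : Node → List Node
  ancSelf_eq : ∀ n, ancSelf n =
      n :: (match parent n with | none => [] | some p => ancSelf p)

namespace LTree

variable {σ UT : Type}

/-- Does the label of `m` carry an annotation of type `ut`? -/
def hasAnnB (T : LTree σ) (ann : σ → UT → Option (AnnValue T.Node))
    (ut : UT) (m : T.Node) : Bool := (ann (T.label m) ut).isSome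

/-- The annotation of type `ut` on the label of `m` exists and is valid at `m`. -/
def annValid (T : LTree σ) (ann : σ → UT → Option (AnnValue T.Node))
    (ut : UT) (m : T.Node) : Prop :=
  ∃ v, ann (T.label m) ut = some v ∧ v.validAt m

/-- Node `a` carries an invalid downward-closed annotation of type `ut`. -/
def annInvalidDC (T : LTree σ) (ann : σ → UT → Option (AnnValue T.Node))
    (ut : UT) (a : T.Node) : Prop :=
  ∃ v, ann (T.label a) ut = some v ∧ v.invalidDC a

/-- The nearest ancestor-or-self of `n` carrying an annotation of type `ut`. -/
def nearestAnn (T : LTree σ) (ann : σ → UT → Option (AnnValue T.Node))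
    (ut : UT) (n : T.Node) : Option T.Node :=
  (T.ancSelf n).find? (T.hasAnnB ann ut)

/-- Strict ancestors of `n`, ordered nearest first. -/
def strictAnc (T : LTree σ) (n : T.Node) : List T.Node := (T.ancSelf n).tail

/-- Definition 3: `n` is updatable w.r.t. `ut`: (i) the nearest ancestor-or-self
carrying an annotation of type `ut` exists and that annotation is valid at it, and
(ii) no strict ancestor of `n` carries an invalid downward-closed annotation of type `ut`. -/
def updatable (T : LTree σ) (ann : σ → UT → Option (AnnValue T.Node))
    (ut : UT) (n : T.Node) : Prop :=
  (∃ m, T.nearestAnn ann ut n = some m ∧ T.annValid ann ut m) ∧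
  (∀ a ∈ T.strictAnc n, ¬ T.annInvalidDC ann ut a)

/-- Updates of type `ut` are explicitly forbidden at `n` (conditions (a∨b) or (c)). -/
def forbidden (T : LTree σ) (ann : σ → UT → Option (AnnValue T.Node))
    (ut : UT) (n : T.Node) : Prop :=
  (∃ m, T.nearestAnn ann ut n = some m ∧ ¬ T.annValid ann ut m) ∨
  (∃ a ∈ T.strictAnc n, T.annInvalidDC ann ut a)

end LTree

/-- semantic correctness of `U_ut^1`: `n` satisfies
`↑*::*[φ_ann][1][φ_valid]` iff the nearest ancestor-or-self of `n` carrying an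
annotation of type `ut` exists and that annotation is valid at it. -/
theorem stmt9 (σ UT : Type) (T : LTree σ)
    (ann : σ → UT → Option (AnnValue T.Node)) (ut : UT) (n : T.Node) :
    (∃ m, ((T.ancSelf n).filter (T.hasAnnB ann ut)).head? = some m ∧
        T.annValid ann ut m) ↔
    (∃ (l₁ : List T.Node) (m : T.Node) (l₂ : List T.Node),
        T.ancSelf n = l₁ ++ m :: l₂ ∧
        (∀ x ∈ l₁, ann (T.label x) ut = none) ∧
        (ann (T.label m) ut).isSome ∧
        T.annValid ann ut m) := by
  have key : ∀ (l : List T.Node) (m : T.Node),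
      (l.filter (T.hasAnnB ann ut)).head? = some m ↔
      ∃ (l₁ : List T.Node) (l₂ : List T.Node),
        l = l₁ ++ m :: l₂ ∧
        (∀ x ∈ l₁, ann (T.label x) ut = none) ∧
        (ann (T.label m) ut).isSome := by
    intro l m
    induction l with
    | nil => simp
    | cons a t ih =>
      by_cases h : T.hasAnnB ann ut a
      · simp only [List.filter_cons, h, if_pos, List.head?_cons, Option.some.injEq]
        constructor
        · rintro rfl
          exact ⟨[], t, by simp, by simp, h⟩
        · rintro ⟨l₁, l₂, heq, hnone, _⟩
          cases l₁ with
          | nil =>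
            exact ((by simpa using heq : a = m ∧ t = l₂)).1
          | cons b t₁ =>
            exfalso
            have hb : ann (T.label b) ut = none := hnone b (by simp)
            have : a = b := by simpa using congrArg List.head? heq
            unfold LTree.hasAnnB at h
            rw [this, hb] at h; simp at h
      · have ha : ann (T.label a) ut = none := by
          unfold LTree.hasAnnB at h
          simpa using h
        rw [List.filter_cons_of_neg (by simpa using h), ih]
        constructor
        · rintro ⟨l₁, l₂, rfl, hnone, hsome⟩
          exact ⟨a :: l₁, l₂, by simp, by
            intro x hx
            rcases List.mem_cons.mp hx with rfl | hx
            · exact ha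
            · exact hnone x hx, hsome⟩
        · rintro ⟨l₁, l₂, heq, hnone, hsome⟩
          cases l₁ with
          | nil =>
            exfalso
            simp only [List.nil_append, List.cons.injEq] at heq
            rw [← heq.1, ha] at hsome
            simp at hsome
          | cons b t₁ =>
            have hab : a = b ∧ t = t₁ ++ m :: l₂ := by simpa using heq
            exact ⟨t₁, l₂, hab.2, fun x hx => hnone x (by simp [hx]), hsome⟩
  constructor
  · rintro ⟨m, hh, hv⟩
    obtain ⟨l₁, l₂, heq, hnone, hsome⟩ := (key _ m).mp hh
    exact ⟨l₁, m, l₂, heq, hnone, hsome, hv⟩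
  · rintro ⟨l₁, m, l₂, heq, hnone, hsome, hv⟩
    exact ⟨m, (key _ m).mpr ⟨l₁, l₂, heq, hnone, hsome⟩, hv⟩
end

section
/- Semantic correctness of the updatability predicate U_ut^2: for any node n, n satisfies U_ut^2 := ⋀_{ann(A,ut)=N_h} not(↑+::A) ∧ ⋀_{ann(A,ut)=[Q]_h} not(↑+::A[not Q]) if and only if no strict ancestor of n carries an invalid downward-closed annotation of type ut. -/
/-- semantic correctness of `U_ut^2`: the conjunction of negated
ancestor tests holds at `n` iff no strict ancestor of `n` carries an invalid
downward-closed annotation of type `ut`. -/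
theorem stmt10 (σ UT : Type) (T : LTree σ)
    (ann : σ → UT → Option (AnnValue T.Node)) (ut : UT) (n : T.Node) :
    ((∀ A : σ, ann A ut = some AnnValue.Nh →
        ∀ a ∈ T.strictAnc n, T.label a ≠ A) ∧
     (∀ (A : σ) (q : T.Node → Prop), ann A ut = some (AnnValue.Qh q) →
        ∀ a ∈ T.strictAnc n, T.label a = A → q a)) ↔
    (∀ a ∈ T.strictAnc n, ¬ T.annInvalidDC ann ut a) := by
  constructor
  · rintro ⟨h1, h2⟩ a ha ⟨v, hv, hinv⟩
    cases v with
    | Nh => exact h1 _ hv a ha rfl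
    | Qh q => exact hinv (h2 _ q hv a ha rfl)
    | Y => exact hinv
    | N => exact hinv
    | Q q => exact hinv
  · intro h
    constructor
    · intro A hA a ha hlab
      exact h a ha ⟨AnnValue.Nh, hlab ▸ hA, trivial⟩
    · intro A q hA a ha hlab
      by_contra hq
      exact h a ha ⟨AnnValue.Qh q, hlab ▸ hA, hq⟩
end

section
/- Combined updatability theorem: a node n is updatable w.r.t. update type ut (per Definition 3) if and only if n satisfies U_ut := U_ut^1 ∧ U_ut^2. -/

lemma find?_eq_head?_filter {α : Type*} (p : α → Bool) (l : List α) :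
    l.find? p = (l.filter p).head? := by
  induction l with
  | nil => rfl
  | cons a l ih =>
    by_cases h : p a
    · rw [List.find?_cons_of_pos h, List.filter_cons_of_pos h, List.head?_cons]
    · rw [List.find?_cons_of_neg h, List.filter_cons_of_neg h, ih]

/-- combined updatability theorem: `n` is updatable w.r.t. `ut`
(Definition 3) iff `n ⊨ U_ut^1 ∧ U_ut^2`. -/
theorem stmt11 (σ UT : Type) (T : LTree σ)
    (ann : σ → UT → Option (AnnValue T.Node)) (ut : UT) (n : T.Node) :
    T.updatable ann ut n ↔
      ((∃ m, ((T.ancSelf n).filter (T.hasAnnB ann ut)).head? = some m ∧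
          T.annValid ann ut m) ∧
       ((∀ A : σ, ann A ut = some AnnValue.Nh →
           ∀ a ∈ T.strictAnc n, T.label a ≠ A) ∧
        (∀ (A : σ) (q : T.Node → Prop), ann A ut = some (AnnValue.Qh q) →
           ∀ a ∈ T.strictAnc n, T.label a = A → q a))) := by
  unfold LTree.updatable LTree.nearestAnn
  rw [find?_eq_head?_filter]
  apply and_congr Iff.rfl
  constructor
  · intro h
    constructor
    · intro A hA a ha hla
      exact h a ha ⟨AnnValue.Nh, by rw [hla]; exact hA, trivial⟩
    · intro A q hA a ha hla
      by_contra hq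
      exact h a ha ⟨AnnValue.Qh q, by rw [hla]; exact hA, hq⟩
  · rintro ⟨h1, h2⟩ a ha ⟨v, hv, hdc⟩
    cases v with
    | Nh => exact h1 _ hv a ha rfl
    | Qh q => exact hdc (h2 _ _ hv a ha rfl)
    | Y => exact hdc
    | N => exact hdc
    | Q q => exact hdc
end
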